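/- Let N ≥ 1, let m¹, m² be C^N functions on an open interval (t₀, t₁) ⊆ ℝ, and let a ∈ ℝ. Then there exist C^N functions l¹, l² on (t₀, t₁) such that 2t·(l¹)'(t) − l¹(t) + a·l²(t) = m¹(t) and 2t·(l²)'(t) − l²(t) − a·l¹(t) = m²(t) for all t ∈ (t₀, t₁). -/

import Mathlib

open Set MeasureTheory intervalIntegral Metric Filter Complex

lemma myCD_of_hasDerivAt {n : ℕ} {s : Set ℝ} (hs : IsOpen s) {f g : ℝ → ℂ}
    (hfg : ∀ t ∈ s, HasDerivAt f (g t) t) (hg : ContDiffOn ℝ n g s) :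
    ContDiffOn ℝ (n + 1 : ℕ) f s := by
  have : ((n+1 : ℕ) : WithTop ℕ∞) = (n : WithTop ℕ∞) + 1 := by norm_cast
  rw [this, contDiffOn_succ_iff_deriv_of_isOpen hs]
  refine ⟨fun t ht => (hfg t ht).differentiableAt.differentiableWithinAt, by simp, ?_⟩
  exact hg.congr (fun t ht => (hfg t ht).deriv)

lemma mySetup {t₀ t₁ x₀ : ℝ} (h0 : (0:ℝ) ∈ Ioo t₀ t₁) (hx : x₀ ∈ Ioo t₀ t₁) :
    ∃ ε > 0, ∃ K : Set ℝ, IsCompact K ∧ K ⊆ Ioo t₀ t₁ ∧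
      (∀ x ∈ Metric.ball x₀ ε, ∀ v : ℝ, 0 ≤ v → v ≤ 1 → x * v^2 ∈ K) ∧
      Metric.ball x₀ ε ⊆ Ioo t₀ t₁ ∧ Convex ℝ K ∧ (0:ℝ) ∈ K := by
  obtain ⟨h0a, h0b⟩ := h0
  obtain ⟨hxa, hxb⟩ := hx
  set ε := min (x₀ - t₀) (t₁ - x₀) / 2 with hε
  have hε0 : 0 < ε := by
    apply div_pos _ two_pos
    exact lt_min (by linarith) (by linarith)
  have hεa : t₀ < x₀ - ε := by
    have h1 : min (x₀ - t₀) (t₁ - x₀) ≤ x₀ - t₀ := min_le_left _ _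
    rw [hε]; linarith
  have hεb : x₀ + ε < t₁ := by
    have h1 : min (x₀ - t₀) (t₁ - x₀) ≤ t₁ - x₀ := min_le_right _ _
    rw [hε]; linarith
  refine ⟨ε, hε0, Icc (min (x₀ - ε) 0) (max (x₀ + ε) 0), isCompact_Icc, ?_, ?_, ?_,
    convex_Icc _ _, ⟨min_le_right _ _, le_max_right _ _⟩⟩
  · apply Icc_subset_Ioo
    · exact lt_min hεa h0a
    · exact max_lt hεb h0b
  · intro x hx v hv0 hv1
    rw [Metric.mem_ball, Real.dist_eq, abs_lt] at hx
    have hv2 : 0 ≤ v^2 := sq_nonneg v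
    have hv3 : v^2 ≤ 1 := by nlinarith
    constructor
    · rcases le_or_gt 0 x with h | h
      · exact le_trans (min_le_right _ _) (by positivity)
      · refine le_trans (min_le_left _ _) ?_
        nlinarith
    · rcases le_or_gt 0 x with h | h
      · refine le_trans ?_ (le_max_left _ _)
        nlinarith
      · exact le_trans (by nlinarith) (le_max_right _ _)
  · intro x hx
    rw [Metric.mem_ball, Real.dist_eq, abs_lt] at hx
    exact ⟨by linarith [hx.1], by linarith [hx.2]⟩

lemma myCpowContAt {c : ℂ} {v : ℝ} (hv : v ≠ 0) : ContinuousAt (fun u : ℝ => (u:ℂ)^c) v :=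
  Complex.continuousAt_ofReal_cpow_const v c (Or.inr hv)

lemma myCpowNormLe {c : ℂ} (hc : 0 ≤ c.re) {v : ℝ} (hv0 : 0 < v) (hv1 : v ≤ 1) :
    ‖(v:ℂ)^c‖ ≤ 1 := by
  rw [Complex.norm_cpow_eq_rpow_re_of_pos hv0]
  exact Real.rpow_le_one hv0.le hv1 hc

noncomputable def myInt (c : ℂ) (M : ℝ → ℂ) (t : ℝ) : ℂ :=
  ∫ v in (0:ℝ)..1, (v:ℂ)^c * M (t * v^2)

lemma myII {f : ℝ → ℂ} (hm : AEStronglyMeasurable f (volume.restrict (Ioc (0:ℝ) 1))) {C : ℝ}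
    (hb : ∀ v ∈ Ioc (0:ℝ) 1, ‖f v‖ ≤ C) : IntervalIntegrable f volume 0 1 := by
  rw [intervalIntegrable_iff_integrableOn_Ioc_of_le zero_le_one]
  exact Integrable.mono' (integrableOn_const measure_Ioc_lt_top.ne) hm
    ((ae_restrict_iff' measurableSet_Ioc).2 (Eventually.of_forall hb))



lemma myMeas {t₀ t₁ : ℝ} {c : ℂ} {M : ℝ → ℂ} (hM : ContinuousOn M (Ioo t₀ t₁))
    {K : Set ℝ} (hK : K ⊆ Ioo t₀ t₁) {x : ℝ}
    (hmem : ∀ v : ℝ, 0 ≤ v → v ≤ 1 → x * v^2 ∈ K) :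
    AEStronglyMeasurable (fun v : ℝ => (v:ℂ)^c * M (x * v^2)) (volume.restrict (Ioc (0:ℝ) 1)) := by
  apply ContinuousOn.aestronglyMeasurable _ measurableSet_Ioc
  intro v hv
  apply ContinuousAt.continuousWithinAt
  have h1 : ContinuousAt (fun v : ℝ => x * v^2) v := by fun_prop
  have h2 : ContinuousAt M (x * v^2) :=
    hM.continuousAt (isOpen_Ioo.mem_nhds (hK (hmem v hv.1.le hv.2)))
  have h3 : ContinuousAt (M ∘ fun v : ℝ => x * v^2) v := ContinuousAt.comp (x := v) h2 h1
  exact (myCpowContAt hv.1.ne').mul h3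

lemma myIntCont {t₀ t₁ : ℝ} (h0 : (0:ℝ) ∈ Ioo t₀ t₁) {c : ℂ} (hc : 0 ≤ c.re) {M : ℝ → ℂ}
    (hM : ContinuousOn M (Ioo t₀ t₁)) : ContinuousOn (myInt c M) (Ioo t₀ t₁) := by
  intro x₀ hx₀
  apply ContinuousAt.continuousWithinAt
  obtain ⟨ε, hε, K, hKc, hKs, hmem, -, -, -⟩ := mySetup h0 hx₀
  obtain ⟨C, hC⟩ := hKc.exists_bound_of_continuousOn (hM.mono hKs)
  apply continuousAt_of_dominated_interval (bound := fun _ => C)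
  · filter_upwards [Metric.ball_mem_nhds x₀ hε] with x hx
    rw [uIoc_of_le zero_le_one]
    exact myMeas hM hKs (hmem x hx)
  · filter_upwards [Metric.ball_mem_nhds x₀ hε] with x hx
    rw [uIoc_of_le zero_le_one]
    refine Eventually.of_forall (fun v hv => ?_)
    calc ‖(v:ℂ)^c * M (x * v^2)‖ = ‖(v:ℂ)^c‖ * ‖M (x * v^2)‖ := norm_mul _ _
    _ ≤ 1 * C := by
        apply mul_le_mul (myCpowNormLe hc hv.1 hv.2) (hC _ (hmem x hx v hv.1.le hv.2))
          (norm_nonneg _) zero_le_one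
    _ = C := one_mul C
  · exact intervalIntegrable_const
  · rw [uIoc_of_le zero_le_one]
    refine Eventually.of_forall (fun v hv => ?_)
    have h1 : ContinuousAt (fun x : ℝ => x * v^2) x₀ := by fun_prop
    have h2 : ContinuousAt M (x₀ * v^2) :=
      hM.continuousAt (isOpen_Ioo.mem_nhds (hKs (hmem x₀ (Metric.mem_ball_self hε) v hv.1.le hv.2)))
    have h3 : ContinuousAt (M ∘ fun x : ℝ => x * v^2) x₀ := ContinuousAt.comp (x := x₀) h2 h1
    exact continuousAt_const.mul h3



lemma myCpowSplit (c : ℂ) {v : ℝ} (hv : 0 < v) (z : ℂ) :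
    (v:ℂ)^c * ((v^2 : ℝ) • z) = (v:ℂ)^(c+2) * z := by
  rw [Complex.real_smul, Complex.cpow_add _ _ (Complex.ofReal_ne_zero.2 hv.ne')]
  rw [show ((2:ℂ) = ((2:ℕ):ℂ)) by norm_num, Complex.cpow_natCast]
  push_cast
  ring

lemma myIntDeriv {t₀ t₁ : ℝ} (h0 : (0:ℝ) ∈ Ioo t₀ t₁) {c : ℂ} (hc : 0 ≤ c.re)
    {M M' : ℝ → ℂ} (hM : ContinuousOn M (Ioo t₀ t₁))
    (hM' : ∀ t ∈ Ioo t₀ t₁, HasDerivAt M (M' t) t)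
    (hM'c : ContinuousOn M' (Ioo t₀ t₁)) {x₀ : ℝ} (hx₀ : x₀ ∈ Ioo t₀ t₁) :
    HasDerivAt (myInt c M) (myInt (c+2) M' x₀) x₀ := by
  obtain ⟨ε, hε, K, hKc, hKs, hmem, hball, -, -⟩ := mySetup h0 hx₀
  obtain ⟨C, hC⟩ := hKc.exists_bound_of_continuousOn (hM.mono hKs)
  obtain ⟨C', hC'⟩ := hKc.exists_bound_of_continuousOn (hM'c.mono hKs)
  have hIoc : (Set.uIoc (0:ℝ) 1) = Ioc 0 1 := uIoc_of_le zero_le_one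
  have key := intervalIntegral.hasDerivAt_integral_of_dominated_loc_of_deriv_le
    (F := fun x v => (v:ℂ)^c * M (x * v^2))
    (F' := fun x v => (v:ℂ)^(c+2) * M' (x * v^2))
    (bound := fun _ => C') (μ := volume) (a := 0) (b := 1) (x₀ := x₀) (Metric.ball_mem_nhds x₀ hε)
    ?_ ?_ ?_ ?_ ?_ ?_
  · exact key.2
  · filter_upwards [Metric.ball_mem_nhds x₀ hε] with x hx
    rw [hIoc]
    exact myMeas hM hKs (hmem x hx)
  · apply myII (myMeas hM hKs (hmem x₀ (Metric.mem_ball_self hε))) (C := C)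
    intro v hv
    calc ‖(v:ℂ)^c * M (x₀ * v^2)‖ = ‖(v:ℂ)^c‖ * ‖M (x₀ * v^2)‖ := norm_mul _ _
    _ ≤ 1 * C := mul_le_mul (myCpowNormLe hc hv.1 hv.2)
        (hC _ (hmem x₀ (Metric.mem_ball_self hε) v hv.1.le hv.2)) (norm_nonneg _) zero_le_one
    _ = C := one_mul C
  · rw [hIoc]
    exact myMeas hM'c hKs (hmem x₀ (Metric.mem_ball_self hε))
  · rw [hIoc]
    refine Eventually.of_forall (fun v hv x hx => ?_)
    calc ‖(v:ℂ)^(c+2) * M' (x * v^2)‖ = ‖(v:ℂ)^(c+2)‖ * ‖M' (x * v^2)‖ := norm_mul _ _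
    _ ≤ 1 * C' := mul_le_mul (myCpowNormLe (by simp [hc]; positivity) hv.1 hv.2)
        (hC' _ (hmem x hx v hv.1.le hv.2)) (norm_nonneg _) zero_le_one
    _ = C' := one_mul C'
  · exact intervalIntegrable_const
  · rw [hIoc]
    refine Eventually.of_forall (fun v hv x hx => ?_)
    have hin : HasDerivAt (fun x : ℝ => x * v^2) (v^2) x := hasDerivAt_mul_const _
    have hout : HasDerivAt M (M' (x * v^2)) (x * v^2) :=
      hM' _ (hKs (hmem x hx v hv.1.le hv.2))
    have hcomp : HasDerivAt (fun x : ℝ => M (x * v^2)) ((v^2 : ℝ) • M' (x * v^2)) x :=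
      HasDerivAt.scomp (𝕜 := ℝ) x hout hin
    have := hcomp.const_mul ((v:ℂ)^c)
    rw [myCpowSplit c hv.1] at this
    exact this



lemma myCastSucc (n : ℕ) : ((n+1 : ℕ) : WithTop ℕ∞) = (n : WithTop ℕ∞) + 1 := by norm_cast

lemma mySplit {t₀ t₁ : ℝ} {n : ℕ} {M : ℝ → ℂ}
    (hM : ContDiffOn ℝ (n+1 : ℕ) M (Ioo t₀ t₁)) :
    (∀ t ∈ Ioo t₀ t₁, HasDerivAt M (deriv M t) t) ∧
      ContDiffOn ℝ n (deriv M) (Ioo t₀ t₁) := by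
  rw [myCastSucc, contDiffOn_succ_iff_deriv_of_isOpen isOpen_Ioo] at hM
  exact ⟨fun t ht => (hM.1 t ht).differentiableAt (isOpen_Ioo.mem_nhds ht) |>.hasDerivAt,
    hM.2.2⟩

lemma myIntCD {t₀ t₁ : ℝ} (h0 : (0:ℝ) ∈ Ioo t₀ t₁) :
    ∀ (n : ℕ) (c : ℂ), 0 ≤ c.re → ∀ M : ℝ → ℂ, ContDiffOn ℝ n M (Ioo t₀ t₁) →
      ContDiffOn ℝ n (myInt c M) (Ioo t₀ t₁) := by
  intro n
  induction n with
  | zero =>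
    intro c hc M hM
    rw [show ((0:ℕ) : WithTop ℕ∞) = 0 by norm_cast, contDiffOn_zero] at *
    exact myIntCont h0 hc hM
  | succ n ih =>
    intro c hc M hM
    obtain ⟨hMd, hMdCD⟩ := mySplit hM
    have hd : ∀ x ∈ Ioo t₀ t₁, HasDerivAt (myInt c M) (myInt (c+2) (deriv M) x) x :=
      fun x hx => myIntDeriv h0 hc hM.continuousOn hMd hMdCD.continuousOn hx
    have hG : ContDiffOn ℝ n (myInt (c+2) (deriv M)) (Ioo t₀ t₁) :=
      ih (c+2) (by rw [Complex.add_re]; norm_num; linarith) (deriv M) hMdCD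
    exact myCD_of_hasDerivAt isOpen_Ioo hd hG



lemma mySingular {t₀ t₁ : ℝ} (h0 : (0:ℝ) ∈ Ioo t₀ t₁) {N : ℕ} (hN : 1 ≤ N) {μ : ℂ}
    (hμ : μ.re = 1) {M : ℝ → ℂ} (hM : ContDiffOn ℝ N M (Ioo t₀ t₁)) :
    ∃ L : ℝ → ℂ, ContDiffOn ℝ N L (Ioo t₀ t₁) ∧
      ∀ t ∈ Ioo t₀ t₁, 2*(t:ℂ) * deriv L t - μ * L t = M t := by
  have hμ0 : μ ≠ 0 := fun h => by simp [h] at hμ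
  obtain ⟨n, rfl⟩ : ∃ n, N = n + 1 := ⟨N - 1, (Nat.succ_pred_eq_of_pos hN).symm⟩
  obtain ⟨hMd, hMdCD⟩ := mySplit hM
  set M' := deriv M with hM'def
  have hMc : ContinuousOn M (Ioo t₀ t₁) := hM.continuousOn
  have hM'c : ContinuousOn M' (Ioo t₀ t₁) := hMdCD.continuousOn
  set F : ℝ → ℝ → ℂ := fun x v => (v:ℂ)^(-1-μ) * (M (x * v^2) - M 0) with hF
  set F' : ℝ → ℝ → ℂ := fun x v => (v:ℂ)^(1-μ) * M' (x * v^2) with hF'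
  set L : ℝ → ℂ := fun t => -(M 0)/μ + ∫ v in (0:ℝ)..1, F t v with hL
  set G : ℝ → ℂ := myInt (1-μ) M' with hG
  have hMsub : ContinuousOn (fun y => M y - M 0) (Ioo t₀ t₁) := hMc.sub continuousOn_const
  -- main derivative step
  have main : ∀ x ∈ Ioo t₀ t₁, IntervalIntegrable (F x) volume 0 1 ∧
      IntervalIntegrable (F' x) volume 0 1 ∧ HasDerivAt L (G x) x := by
    intro x₀ hx₀
    obtain ⟨ε, hε, K, hKc, hKs, hmem, hball, hKconv, hK0⟩ := mySetup h0 hx₀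
    obtain ⟨C', hC'⟩ := hKc.exists_bound_of_continuousOn (hM'c.mono hKs)
    have hIoc : (Set.uIoc (0:ℝ) 1) = Ioc 0 1 := uIoc_of_le zero_le_one
    have hLip : ∀ y ∈ K, ∀ z ∈ K, ‖M y - M z‖ ≤ C' * ‖y - z‖ := by
      intro y hy z hz
      exact hKconv.norm_image_sub_le_of_norm_hasDerivWithin_le
        (fun w hw => (hMd w (hKs hw)).hasDerivWithinAt) (fun w hw => hC' w hw) hz hy
    have hnorm : ∀ v : ℝ, 0 < v → v ≤ 1 → ‖((v:ℝ):ℂ)^(-1-μ)‖ = (v^2)⁻¹ := by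
      intro v hv hv1
      rw [Complex.norm_cpow_eq_rpow_re_of_pos hv]
      rw [show (-1-μ).re = -2 by simp [Complex.sub_re, Complex.neg_re, Complex.one_re, hμ]; norm_num]
      rw [show (-2:ℝ) = -((2:ℕ):ℝ) by norm_num, Real.rpow_neg hv.le, Real.rpow_natCast]
    have hFbound : ∀ x ∈ Metric.ball x₀ ε, ∀ v ∈ Ioc (0:ℝ) 1, ‖F x v‖ ≤ C' * (|x₀| + ε) := by
      intro x hx v hv
      have hxv : x * v^2 ∈ K := hmem x hx v hv.1.le hv.2
      have h1 : ‖F x v‖ = (v^2)⁻¹ * ‖M (x * v^2) - M 0‖ := by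
        rw [hF]; simp only [norm_mul]; rw [hnorm v hv.1 hv.2]
      have h2 : ‖M (x * v^2) - M 0‖ ≤ C' * (|x| * v^2) := by
        have := hLip _ hxv _ hK0
        simpa [abs_mul, _root_.sq_abs] using this
      have hxb : |x| ≤ |x₀| + ε := by
        rw [Metric.mem_ball, Real.dist_eq] at hx
        calc |x| = |x₀ + (x - x₀)| := by ring_nf
        _ ≤ |x₀| + |x - x₀| := abs_add_le _ _
        _ ≤ |x₀| + ε := by linarith [hx.le]
      have hC'0 : 0 ≤ C' := le_trans (norm_nonneg _) (hC' _ hK0)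
      rw [h1]
      have hv2 : (0:ℝ) < v^2 := pow_pos hv.1 2
      calc (v^2)⁻¹ * ‖M (x * v^2) - M 0‖ ≤ (v^2)⁻¹ * (C' * (|x| * v^2)) := by
            exact mul_le_mul_of_nonneg_left h2 (inv_nonneg.2 (sq_nonneg v))
      _ = C' * |x| := by field_simp [hv.1.ne']
      _ ≤ C' * (|x₀| + ε) := by
            apply mul_le_mul_of_nonneg_left hxb hC'0
    have hFmeas : ∀ x ∈ Metric.ball x₀ ε,
        AEStronglyMeasurable (F x) (volume.restrict (Ioc (0:ℝ) 1)) :=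
      fun x hx => myMeas hMsub hKs (hmem x hx)
    have key := intervalIntegral.hasDerivAt_integral_of_dominated_loc_of_deriv_le
      (F := F) (F' := F') (bound := fun _ => C') (μ := volume) (a := 0) (b := 1) (x₀ := x₀) (Metric.ball_mem_nhds x₀ hε)
      ?_ ?_ ?_ ?_ ?_ ?_
    rotate_left
    · filter_upwards [Metric.ball_mem_nhds x₀ hε] with x hx
      rw [hIoc]; exact hFmeas x hx
    · exact myII (hFmeas x₀ (Metric.mem_ball_self hε))
        (hFbound x₀ (Metric.mem_ball_self hε))
    · rw [hIoc]; exact myMeas hM'c hKs (hmem x₀ (Metric.mem_ball_self hε))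
    · rw [hIoc]
      refine Eventually.of_forall (fun v hv x hx => ?_)
      have hxv : x * v^2 ∈ K := hmem x hx v hv.1.le hv.2
      calc ‖F' x v‖ = ‖((v:ℝ):ℂ)^(1-μ)‖ * ‖M' (x * v^2)‖ := norm_mul _ _
      _ ≤ 1 * C' := mul_le_mul (myCpowNormLe (by simp [hμ]) hv.1 hv.2)
          (hC' _ hxv) (norm_nonneg _) zero_le_one
      _ = C' := one_mul C'
    · exact intervalIntegrable_const
    · rw [hIoc]
      refine Eventually.of_forall (fun v hv x hx => ?_)
      have hin : HasDerivAt (fun x : ℝ => x * v^2) (v^2) x := hasDerivAt_mul_const _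
      have hout : HasDerivAt M (M' (x * v^2)) (x * v^2) :=
        hMd _ (hKs (hmem x hx v hv.1.le hv.2))
      have hcomp : HasDerivAt (fun x : ℝ => M (x * v^2)) ((v^2 : ℝ) • M' (x * v^2)) x :=
        HasDerivAt.scomp (𝕜 := ℝ) x hout hin
      have hsub : HasDerivAt (fun x : ℝ => M (x * v^2) - M 0) ((v^2 : ℝ) • M' (x * v^2)) x :=
        hcomp.sub_const _
      have := hsub.const_mul (((v:ℝ):ℂ)^(-1-μ))
      rw [myCpowSplit (-1-μ) hv.1, show (-1-μ)+2 = 1-μ by ring] at this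
      exact this
    · refine ⟨myII (hFmeas x₀ (Metric.mem_ball_self hε)) (hFbound x₀ (Metric.mem_ball_self hε)),
        key.1, ?_⟩
      have hGeq : G x₀ = ∫ v in (0:ℝ)..1, F' x₀ v := rfl
      rw [hGeq]
      exact key.2.const_add (-(M 0)/μ)
  refine ⟨L, ?_, ?_⟩
  · have hGCD : ContDiffOn ℝ n G (Ioo t₀ t₁) :=
      myIntCD h0 n (1-μ) (by simp [Complex.sub_re, Complex.one_re, hμ]) M' hMdCD
    exact myCD_of_hasDerivAt isOpen_Ioo (fun t ht => (main t ht).2.2) hGCD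
  · intro x hx
    have hLd := (main x hx).2.2
    rw [hLd.deriv]
    -- the ODE identity via the fundamental theorem of calculus on (0,1)
    obtain ⟨ε, hε, K, hKc, hKs, hmem, hball, hKconv, hK0⟩ := mySetup h0 hx
    obtain ⟨C', hC'⟩ := hKc.exists_bound_of_continuousOn (hM'c.mono hKs)
    have hLip : ∀ y ∈ K, ∀ z ∈ K, ‖M y - M z‖ ≤ C' * ‖y - z‖ := by
      intro y hy z hz
      exact hKconv.norm_image_sub_le_of_norm_hasDerivWithin_le
        (fun w hw => (hMd w (hKs hw)).hasDerivWithinAt) (fun w hw => hC' w hw) hz hy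
    set f : ℝ → ℂ := fun v => (v:ℂ)^(-μ) * (M (x * v^2) - M 0) with hf
    set f' : ℝ → ℂ := fun v => (-μ) * F x v + (2*(x:ℂ)) * F' x v with hf'
    have hmemIoo : ∀ v : ℝ, 0 ≤ v → v ≤ 1 → x * v^2 ∈ Ioo t₀ t₁ :=
      fun v hv0 hv1 => hKs (hmem x (Metric.mem_ball_self hε) v hv0 hv1)
    have hderiv : ∀ v ∈ Ioo (0:ℝ) 1, HasDerivAt f (f' v) v := by
      intro v hv
      have hv0 : (v:ℝ) ≠ 0 := hv.1.ne'
      have hr : -μ - 1 ≠ -1 := by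
        intro h; apply hμ0; linear_combination -h
      have hpow0 := hasDerivAt_ofReal_cpow_const' hv0 hr
      rw [show -μ - 1 + 1 = -μ by ring] at hpow0
      have hpow1 := hpow0.const_mul (-μ)
      have hfeq : (fun y : ℝ => -μ * ((y:ℂ)^(-μ)/(-μ))) = fun y : ℝ => (y:ℂ)^(-μ) := by
        funext y; field_simp
      rw [hfeq] at hpow1
      have hq : HasDerivAt (fun v : ℝ => x * v^2) (x * (2*v)) v := by
        simpa using (hasDerivAt_pow 2 v).const_mul x
      have hMcomp : HasDerivAt (fun v : ℝ => M (x * v^2)) ((x*(2*v)) • M' (x * v^2)) v :=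
        HasDerivAt.scomp (𝕜 := ℝ) v (hMd _ (hmemIoo v hv.1.le hv.2.le)) hq
      have hsub := hMcomp.sub_const (M 0)
      have hprod := hpow1.mul hsub
      have hcpow1 : ((v:ℝ):ℂ)^(1-μ) = (v:ℂ) * ((v:ℝ):ℂ)^(-μ) := by
        rw [show (1:ℂ) - μ = 1 + -μ by ring,
          Complex.cpow_add _ _ (Complex.ofReal_ne_zero.2 hv0), Complex.cpow_one]
      have heq : -μ * (v:ℂ)^(-μ-1) * (M (x * v^2) - M 0)
          + (v:ℂ)^(-μ) * ((x*(2*v)) • M' (x * v^2)) = f' v := by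
        simp only [hf', hF, hF']
        rw [Complex.real_smul, hcpow1, show -μ-1 = -1-μ by ring]
        push_cast
        ring
      rw [heq] at hprod
      exact hprod
    have hint1 : IntervalIntegrable (fun v => (-μ) * F x v) volume 0 1 :=
      (main x hx).1.const_mul _
    have hint2 : IntervalIntegrable (fun v => (2*(x:ℂ)) * F' x v) volume 0 1 :=
      (main x hx).2.1.const_mul _
    have hint : IntervalIntegrable f' volume 0 1 := hint1.add hint2
    have hnorm : ∀ v : ℝ, 0 < v → ‖((v:ℝ):ℂ)^(-μ)‖ = v⁻¹ := by
      intro v hv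
      rw [Complex.norm_cpow_eq_rpow_re_of_pos hv,
        show (-μ).re = -1 by simp [hμ], Real.rpow_neg_one]
    have ha : Filter.Tendsto f (nhdsWithin 0 (Ioi 0)) (nhds 0) := by
      apply squeeze_zero_norm' (a := fun v => C' * |x| * v)
      · filter_upwards [Ioc_mem_nhdsGT_of_mem (Set.left_mem_Ico.2 zero_lt_one)] with v hv
        have hxv : x * v^2 ∈ K := hmem x (Metric.mem_ball_self hε) v hv.1.le hv.2
        have h2 : ‖M (x * v^2) - M 0‖ ≤ C' * (|x| * v^2) := by
          have := hLip _ hxv _ hK0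
          simpa [abs_mul, _root_.sq_abs] using this
        have hfv : ‖f v‖ = v⁻¹ * ‖M (x * v^2) - M 0‖ := by
          simp only [hf, norm_mul]
          rw [hnorm v hv.1]
        rw [hfv]
        calc v⁻¹ * ‖M (x * v^2) - M 0‖ ≤ v⁻¹ * (C' * (|x| * v^2)) :=
              mul_le_mul_of_nonneg_left h2 (inv_nonneg.2 hv.1.le)
        _ = C' * |x| * v := by
              have hvne : v ≠ 0 := hv.1.ne'
              field_simp [sq]
      · have : Filter.Tendsto (fun v : ℝ => C' * |x| * v) (nhds 0) (nhds (C' * |x| * 0)) :=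
          (continuous_const.mul continuous_id).tendsto 0
        rw [mul_zero] at this
        exact this.mono_left nhdsWithin_le_nhds
    have hb : Filter.Tendsto f (nhdsWithin 1 (Iio 1)) (nhds (M x - M 0)) := by
      have h1 : ContinuousAt (fun v : ℝ => x * v^2) 1 := by fun_prop
      have h2 : ContinuousAt M (x * (1:ℝ)^2) := by
        apply hMc.continuousAt (isOpen_Ioo.mem_nhds _)
        simpa using hx
      have h3 : ContinuousAt (M ∘ fun v : ℝ => x * v^2) 1 := ContinuousAt.comp (x := (1:ℝ)) h2 h1
      have hcont : ContinuousAt f 1 :=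
        (myCpowContAt one_ne_zero).mul (h3.sub continuousAt_const)
      have hf1 : f 1 = M x - M 0 := by
        rw [hf]
        simp
      rw [← hf1]
      exact hcont.tendsto.mono_left nhdsWithin_le_nhds
    have hFTC := intervalIntegral.integral_eq_sub_of_hasDerivAt_of_tendsto zero_lt_one
      hderiv hint ha hb
    have hsplit : ∫ v in (0:ℝ)..1, f' v =
        (-μ) * (∫ v in (0:ℝ)..1, F x v) + (2*(x:ℂ)) * (∫ v in (0:ℝ)..1, F' x v) := by
      rw [intervalIntegral.integral_add hint1 hint2, intervalIntegral.integral_const_mul,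
        intervalIntegral.integral_const_mul]
    have hkey : (-μ) * (∫ v in (0:ℝ)..1, F x v) + (2*(x:ℂ)) * (∫ v in (0:ℝ)..1, F' x v)
        = M x - M 0 := by
      rw [← hsplit, hFTC]; ring
    have hGx : G x = ∫ v in (0:ℝ)..1, F' x v := rfl
    have hLx : L x = -(M 0)/μ + ∫ v in (0:ℝ)..1, F x v := rfl
    rw [hGx, hLx]
    have h2 : μ * (-(M 0)/μ) = -(M 0) := by field_simp
    calc 2*(x:ℂ) * (∫ v in (0:ℝ)..1, F' x v) - μ * (-(M 0)/μ + ∫ v in (0:ℝ)..1, F x v)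
        = ((-μ) * (∫ v in (0:ℝ)..1, F x v) + (2*(x:ℂ)) * (∫ v in (0:ℝ)..1, F' x v)) - μ * (-(M 0)/μ) := by
          rw [mul_add]; ring
    _ = M x := by rw [hkey, h2]; ring

lemma myNonsingular {t₀ t₁ : ℝ} (h0 : (0:ℝ) ∉ Ioo t₀ t₁) {N : ℕ} (hN : 1 ≤ N) (μ : ℂ)
    {M : ℝ → ℂ} (hM : ContDiffOn ℝ N M (Ioo t₀ t₁)) (hne : (Ioo t₀ t₁).Nonempty) :
    ∃ L : ℝ → ℂ, ContDiffOn ℝ N L (Ioo t₀ t₁) ∧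
      ∀ t ∈ Ioo t₀ t₁, 2*(t:ℂ) * deriv L t - μ * L t = M t := by
  obtain ⟨c, hc⟩ := hne
  have hts : ∀ t ∈ Ioo t₀ t₁, t ≠ 0 := fun t ht h => h0 (h ▸ ht)
  set w : ℝ → ℂ := fun t => Complex.exp ((μ/2) * (Real.log t : ℂ)) with hw
  set h : ℝ → ℂ := fun s => (w s)⁻¹ * M s * ((s⁻¹ : ℝ) : ℂ) with hh
  set F : ℝ → ℂ := fun t => ∫ s in c..t, h s with hFdef
  set L : ℝ → ℂ := fun t => w t * F t / 2 with hLdef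
  have hw0 : ∀ t : ℝ, w t ≠ 0 := fun t => Complex.exp_ne_zero _
  have hwd : ∀ t : ℝ, t ≠ 0 → HasDerivAt w (w t * ((μ/2) * (t:ℂ)⁻¹)) t := by
    intro t ht
    have h1 : HasDerivAt (fun t : ℝ => ((Real.log t : ℝ) : ℂ)) ((t⁻¹ : ℝ) : ℂ) t :=
      (Real.hasDerivAt_log ht).ofReal_comp
    have h2 := h1.const_mul (μ/2)
    have h3 := h2.cexp
    have : (μ/2) * ((t⁻¹ : ℝ) : ℂ) = (μ/2) * (t:ℂ)⁻¹ := by push_cast; ring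
    rw [this] at h3
    exact h3
  have hwCD : ∀ n : ℕ, ContDiffOn ℝ n w (Ioo t₀ t₁) := by
    intro n
    intro t ht
    apply ContDiffAt.contDiffWithinAt
    have hlog : ContDiffAt ℝ n Real.log t := Real.contDiffAt_log.2 (hts t ht)
    have hro : ContDiffAt ℝ n (fun t : ℝ => ((Real.log t : ℝ):ℂ)) t :=
      Complex.ofRealCLM.contDiff.contDiffAt.comp t hlog
    have hmul : ContDiffAt ℝ n (fun t : ℝ => (μ/2) * ((Real.log t : ℝ):ℂ)) t :=
      contDiffAt_const.mul hro
    exact Complex.contDiff_exp.contDiffAt.comp t hmul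
  have hinvCD : ∀ n : ℕ, ContDiffOn ℝ n (fun s : ℝ => ((s⁻¹ : ℝ) : ℂ)) (Ioo t₀ t₁) := by
    intro n s hs
    apply ContDiffAt.contDiffWithinAt
    exact Complex.ofRealCLM.contDiff.contDiffAt.comp s (contDiffAt_inv ℝ (hts s hs))
  have hhCD : ContDiffOn ℝ N h (Ioo t₀ t₁) :=
    (((hwCD N).inv (fun s hs => hw0 s)).mul hM).mul (hinvCD N)
  have hhcont : ContinuousOn h (Ioo t₀ t₁) := hhCD.continuousOn
  have hFd : ∀ t ∈ Ioo t₀ t₁, HasDerivAt F (h t) t := by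
    intro t ht
    apply intervalIntegral.integral_hasDerivAt_right
    · exact (hhcont.mono (Set.ordConnected_Ioo.uIcc_subset hc ht)).intervalIntegrable
    · exact hhcont.stronglyMeasurableAtFilter isOpen_Ioo t ht
    · exact hhcont.continuousAt (isOpen_Ioo.mem_nhds ht)
  obtain ⟨n, hn⟩ : ∃ n, N = n + 1 := ⟨N - 1, (Nat.succ_pred_eq_of_pos hN).symm⟩
  have hFCD : ContDiffOn ℝ N F (Ioo t₀ t₁) := by
    rw [hn]
    apply myCD_of_hasDerivAt isOpen_Ioo hFd
    apply hhCD.of_le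
    rw [hn]
    exact_mod_cast Nat.le_succ n
  have hLCD : ContDiffOn ℝ N L (Ioo t₀ t₁) := ((hwCD N).mul hFCD).div_const 2
  refine ⟨L, hLCD, ?_⟩
  intro t ht
  have htne : t ≠ 0 := hts t ht
  have hLd : HasDerivAt L ((w t * ((μ/2) * (t:ℂ)⁻¹) * F t + w t * h t)/2) t :=
    ((hwd t htne).mul (hFd t ht)).div_const 2
  rw [hLd.deriv]
  have htC : (t:ℂ) ≠ 0 := Complex.ofReal_ne_zero.2 htne
  have hhval : h t = (w t)⁻¹ * M t * ((t⁻¹ : ℝ) : ℂ) := rfl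
  rw [hhval, Complex.ofReal_inv]
  field_simp [hw0 t]
  ring

theorem singular_ode_solvability_C (N : ℕ) (hN : 1 ≤ N) (t₀ t₁ : ℝ) (m₁ m₂ : ℝ → ℝ)
    (hm₁ : ContDiffOn ℝ N m₁ (Set.Ioo t₀ t₁)) (hm₂ : ContDiffOn ℝ N m₂ (Set.Ioo t₀ t₁))
    (a : ℝ) :
    ∃ l₁ l₂ : ℝ → ℝ, ContDiffOn ℝ N l₁ (Set.Ioo t₀ t₁) ∧ ContDiffOn ℝ N l₂ (Set.Ioo t₀ t₁) ∧
      ∀ t ∈ Set.Ioo t₀ t₁,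
        2 * t * deriv l₁ t - l₁ t + a * l₂ t = m₁ t ∧
        2 * t * deriv l₂ t - l₂ t - a * l₁ t = m₂ t := by
  by_cases hne : (Set.Ioo t₀ t₁).Nonempty
  · set μ : ℂ := 1 + (a:ℂ) * Complex.I with hμdef
    have hμre : μ.re = 1 := by simp [hμdef]
    set M : ℝ → ℂ := fun t => (m₁ t : ℂ) + (m₂ t : ℂ) * Complex.I with hMdef
    have hMCD : ContDiffOn ℝ N M (Set.Ioo t₀ t₁) :=
      (Complex.ofRealCLM.contDiff.comp_contDiffOn hm₁).add
        ((Complex.ofRealCLM.contDiff.comp_contDiffOn hm₂).mul contDiffOn_const)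
    obtain ⟨L, hLCD, hODE⟩ : ∃ L : ℝ → ℂ, ContDiffOn ℝ N L (Set.Ioo t₀ t₁) ∧
        ∀ t ∈ Set.Ioo t₀ t₁, 2*(t:ℂ) * deriv L t - μ * L t = M t := by
      by_cases h0 : (0:ℝ) ∈ Set.Ioo t₀ t₁
      · exact mySingular h0 hN hμre hMCD
      · exact myNonsingular h0 hN μ hMCD hne
    refine ⟨fun t => (L t).re, fun t => (L t).im,
      Complex.reCLM.contDiff.comp_contDiffOn hLCD,
      Complex.imCLM.contDiff.comp_contDiffOn hLCD, ?_⟩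
    intro t ht
    have hdiff : DifferentiableAt ℝ L t :=
      ((hLCD.differentiableOn (by exact_mod_cast (show N ≠ 0 by omega))) t ht).differentiableAt
        (isOpen_Ioo.mem_nhds ht)
    have hLd : HasDerivAt L (deriv L t) t := hdiff.hasDerivAt
    have h1 : HasDerivAt (fun t => (L t).re) (deriv L t).re t :=
      Complex.reCLM.hasFDerivAt.comp_hasDerivAt t hLd
    have h2 : HasDerivAt (fun t => (L t).im) (deriv L t).im t :=
      Complex.imCLM.hasFDerivAt.comp_hasDerivAt t hLd
    have heq := hODE t ht
    rw [Complex.ext_iff] at heq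
    obtain ⟨hre, him⟩ := heq
    simp only [hMdef, hμdef, Complex.mul_re, Complex.mul_im, Complex.add_re, Complex.add_im,
      Complex.ofReal_re, Complex.ofReal_im, Complex.I_re, Complex.I_im, Complex.one_re,
      Complex.one_im, Complex.sub_re, Complex.sub_im, Complex.re_ofNat, Complex.im_ofNat,
      mul_zero, mul_one, zero_mul, sub_zero, add_zero, zero_add, zero_sub, neg_zero] at hre him
    rw [h1.deriv, h2.deriv]
    beta_reduce
    constructor
    · linarith [hre]
    · linarith [him]
  · rw [Set.not_nonempty_iff_eq_empty] at hne
    refine ⟨0, 0, ?_, ?_, ?_⟩ <;> rw [hne]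
    · exact fun x hx => absurd hx (notMem_empty x)
    · exact fun x hx => absurd hx (notMem_empty x)
    · exact fun t ht => absurd ht (notMem_empty t)
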